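/- Let σ be a mixed strategy such that for all players i ∈ [n] and all pairs of σ-supported actions j, k ∈ A_i with j ≠ k one has σ_{ij} ≠ σ_{ik}. Define γ^{CE} as the minimum of t_{ijk} over all players i, σ-supported j ∈ A_i, and k ∈ A_i with k ≠ j; then γ^{CE} > 0. Moreover, for any B > 0 and any ε with 0 < ε ≤ B·γ^{CE}, the scaled witness utility u := B·w satisfies |u_i(j, a_{-i})| ≤ B for all i, j, a_{-i}, and for every player i, every σ-supported j ∈ A_i, and every k ∈ A_i with k ≠ j, ∑_{a_{-i}} σ_{ij}(a_{-i}) (u_i(j, a_{-i}) − u_i(k, a_{-i})) ≥ ε. -/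

import Mathlib

open scoped BigOperators

section Prelim

variable {n : ℕ}

/-- Joint action obtained from player `i`'s action `j` and the other players' actions `b`,
i.e. the joint action `(j, a_{-i})`. -/
def joinA {A : Fin n → Type*} (i : Fin n) (j : A i)
    (b : ∀ l : {l : Fin n // l ≠ i}, A l) : ∀ l, A l :=
  fun l => if h : l = i then h.symm ▸ j else b ⟨l, h⟩

/-- The actions `a_{-i}` of all players other than `i` in the joint action `a`. -/
def restr {A : Fin n → Type*} (i : Fin n) (a : ∀ l, A l) :
    ∀ l : {l : Fin n // l ≠ i}, A l :=
  fun l => a l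

/-- `σ` is a mixed strategy: nonnegative and sums to one. -/
def IsMixed {X : Type*} [Fintype X] (σ : X → ℝ) : Prop :=
  (∀ x, 0 ≤ σ x) ∧ ∑ x, σ x = 1

/-- Marginal probability `p_{ij}` that player `i` plays `j` under `σ`. -/
noncomputable def marg {A : Fin n → Type*} [∀ l, Fintype (A l)]
    (σ : (∀ l, A l) → ℝ) (i : Fin n) (j : A i) : ℝ :=
  ∑ b : ∀ l : {l : Fin n // l ≠ i}, A l, σ (joinA i j b)

/-- Conditional distribution `σ_{ij}` over the other players' actions:
`σ_{ij}(a_{-i}) = σ(j, a_{-i}) / p_{ij}` if `p_{ij} > 0`, and the zero function otherwise. -/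
noncomputable def condl {A : Fin n → Type*} [∀ l, Fintype (A l)]
    (σ : (∀ l, A l) → ℝ) (i : Fin n) (j : A i) :
    (∀ l : {l : Fin n // l ≠ i}, A l) → ℝ :=
  fun b => if 0 < marg σ i j then σ (joinA i j b) / marg σ i j else 0

/-- Euclidean norm `‖·‖₂` on `ℝ^X`. -/
noncomputable def norm2 {X : Type*} [Fintype X] (f : X → ℝ) : ℝ :=
  Real.sqrt (∑ x, f x ^ 2)

/-- Euclidean inner product `⟨·,·⟩` on `ℝ^X`. -/
noncomputable def inner2 {X : Type*} [Fintype X] (f g : X → ℝ) : ℝ :=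
  ∑ x, f x * g x

/-- The witness utility `w_i(j, a_{-i}) = σ_{ij}(a_{-i}) / ‖σ_{ij}‖₂` if `p_{ij} > 0`,
and `0` otherwise. -/
noncomputable def wit {A : Fin n → Type*} [∀ l, Fintype (A l)]
    (σ : (∀ l, A l) → ℝ) (i : Fin n) (a : ∀ l, A l) : ℝ :=
  if 0 < marg σ i (a i) then condl σ i (a i) (restr i a) / norm2 (condl σ i (a i)) else 0

open Classical in
/-- `t_{ijk} = ‖σ_{ij}‖₂ - ⟨σ_{ij}, σ_{ik}⟩ / ‖σ_{ik}‖₂` if `σ_{ik} ≠ 0`,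
and `t_{ijk} = ‖σ_{ij}‖₂` if `σ_{ik} = 0`. -/
noncomputable def tq {A : Fin n → Type*} [∀ l, Fintype (A l)]
    (σ : (∀ l, A l) → ℝ) (i : Fin n) (j k : A i) : ℝ :=
  if condl σ i k = 0 then norm2 (condl σ i j)
  else norm2 (condl σ i j) - inner2 (condl σ i j) (condl σ i k) / norm2 (condl σ i k)

end Prelim

section Aux
open scoped RealInnerProductSpace
variable {n : ℕ} {A : Fin n → Type*} [∀ l, Fintype (A l)]

lemma joinA_apply_self (i : Fin n) (j : A i) (b : ∀ l : {l : Fin n // l ≠ i}, A l) :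
    joinA i j b i = j := by simp [joinA]

lemma restr_joinA (i : Fin n) (j : A i) (b : ∀ l : {l : Fin n // l ≠ i}, A l) :
    restr i (joinA i j b) = b := by
  funext l
  simp [restr, joinA, l.2]

lemma condl_nonneg (σ : (∀ l, A l) → ℝ) (hσ : IsMixed σ) (i : Fin n) (j : A i)
    (b : ∀ l : {l : Fin n // l ≠ i}, A l) : 0 ≤ condl σ i j b := by
  unfold condl
  split
  · exact div_nonneg (hσ.1 _) (le_of_lt ‹_›)
  · exact le_refl _

lemma condl_sum (σ : (∀ l, A l) → ℝ) (i : Fin n) (j : A i) (h : 0 < marg σ i j) :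
    ∑ b, condl σ i j b = 1 := by
  simp only [condl, if_pos h, ← Finset.sum_div]
  rw [← marg, div_self h.ne']

lemma condl_of_not_pos (σ : (∀ l, A l) → ℝ) (i : Fin n) (k : A i) (h : ¬ 0 < marg σ i k) :
    condl σ i k = 0 := by
  funext b; simp [condl, h]

lemma condl_ne_zero (σ : (∀ l, A l) → ℝ) (i : Fin n) (j : A i) (h : 0 < marg σ i j) :
    condl σ i j ≠ 0 := by
  intro h0
  have := condl_sum σ i j h
  rw [h0] at this
  simpa using this

lemma sumsq_eq_sq_norm2 {X : Type*} [Fintype X] (f : X → ℝ) :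
    ∑ x, f x ^ 2 = norm2 f ^ 2 := by
  rw [norm2, Real.sq_sqrt]
  exact Finset.sum_nonneg fun x _ => sq_nonneg _

lemma norm2_pos (σ : (∀ l, A l) → ℝ) (i : Fin n) (j : A i) (h : 0 < marg σ i j) :
    0 < norm2 (condl σ i j) := by
  rw [norm2, Real.sqrt_pos]
  by_contra hle
  have hz : ∀ b, condl σ i j b = 0 := by
    intro b
    have h1 : ∑ b, condl σ i j b ^ 2 = 0 :=
      le_antisymm (not_lt.mp hle) (Finset.sum_nonneg fun x _ => sq_nonneg _)
    have := (Finset.sum_eq_zero_iff_of_nonneg (fun x _ => sq_nonneg (condl σ i j x))).mp h1 b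
      (Finset.mem_univ b)
    exact (pow_eq_zero_iff two_ne_zero).mp this
  exact condl_ne_zero σ i j h (funext hz)

lemma le_norm2 {X : Type*} [Fintype X] (f : X → ℝ) (hf : ∀ x, 0 ≤ f x) (x : X) :
    f x ≤ norm2 f := by
  have h1 : f x ^ 2 ≤ ∑ y, f y ^ 2 :=
    Finset.single_le_sum (fun y _ => sq_nonneg (f y)) (Finset.mem_univ x)
  calc f x = Real.sqrt (f x ^ 2) := by rw [Real.sqrt_sq (hf x)]
    _ ≤ _ := Real.sqrt_le_sqrt h1

lemma wit_joinA (σ : (∀ l, A l) → ℝ) (i : Fin n) (j : A i)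
    (b : ∀ l : {l : Fin n // l ≠ i}, A l) :
    wit σ i (joinA i j b) =
      if 0 < marg σ i j then condl σ i j b / norm2 (condl σ i j) else 0 := by
  unfold wit
  rw [joinA_apply_self, restr_joinA]

lemma inner2_lt (σ : (∀ l, A l) → ℝ) (i : Fin n) (j k : A i)
    (hj : 0 < marg σ i j) (hk : 0 < marg σ i k)
    (hne : condl σ i j ≠ condl σ i k) :
    inner2 (condl σ i j) (condl σ i k) < norm2 (condl σ i j) * norm2 (condl σ i k) := by
  classical
  set X := ∀ l : {l : Fin n // l ≠ i}, A l with hX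
  set f := condl σ i j with hf
  set g := condl σ i k with hg
  set x : EuclideanSpace ℝ X := (WithLp.equiv 2 _).symm f with hx
  set y : EuclideanSpace ℝ X := (WithLp.equiv 2 _).symm g with hy
  have hnx : ‖x‖ = norm2 f := by
    simp [hx, EuclideanSpace.norm_eq, norm2, sq_abs, WithLp.equiv_symm_apply, PiLp.toLp_apply]
    convert rfl
  have hny : ‖y‖ = norm2 g := by
    simp [hy, EuclideanSpace.norm_eq, norm2, sq_abs, WithLp.equiv_symm_apply, PiLp.toLp_apply]
    convert rfl
  have hinner : (inner ℝ x y : ℝ) = inner2 f g := by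
    simp [hx, hy, PiLp.inner_apply, inner2, WithLp.equiv_symm_apply, PiLp.toLp_apply, RCLike.inner_apply, mul_comm]
    convert rfl
  rw [← hnx, ← hny, ← hinner]
  rcases lt_or_eq_of_le (real_inner_le_norm x y) with h | h
  · exact h
  · exfalso
    have heq : ‖y‖ • x = ‖x‖ • y := inner_eq_norm_mul_iff_real.mp h
    have hcoord : ∀ b : X, norm2 g * f b = norm2 f * g b := by
      intro b
      have : (‖y‖ • x) b = (‖x‖ • y) b := congrArg (fun v : EuclideanSpace ℝ X => v b) heq
      rw [PiLp.smul_apply, PiLp.smul_apply, hnx, hny] at this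
      simpa [hx, hy, hnx, hny, WithLp.equiv_symm_apply, PiLp.toLp_apply, PiLp.smul_apply, smul_eq_mul] using this
    have hsum : norm2 g * ∑ b, f b = norm2 f * ∑ b, g b := by
      rw [Finset.mul_sum, Finset.mul_sum]
      exact Finset.sum_congr rfl fun b _ => hcoord b
    rw [condl_sum σ i j hj, condl_sum σ i k hk] at hsum
    simp only [mul_one] at hsum
    apply hne
    funext b
    have h2 := hcoord b
    rw [← hsum] at h2
    exact mul_left_cancel₀ (norm2_pos σ i k hk).ne' h2

lemma tq_pos_aux (σ : (∀ l, A l) → ℝ) (i : Fin n) (j k : A i)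
    (hj : 0 < marg σ i j)
    (hne : 0 < marg σ i k → condl σ i j ≠ condl σ i k) :
    0 < tq σ i j k := by
  classical
  by_cases hk0 : condl σ i k = 0
  · rw [tq, if_pos hk0]
    exact norm2_pos σ i j hj
  · rw [tq, if_neg hk0]
    have hk : 0 < marg σ i k := by
      by_contra h
      exact hk0 (condl_of_not_pos σ i k h)
    have hNk := norm2_pos σ i k hk
    have hlt := inner2_lt σ i j k hj hk (hne hk)
    rw [sub_pos]
    rw [div_lt_iff₀ hNk]
    exact hlt

lemma sum_gap_eq (σ : (∀ l, A l) → ℝ) (i : Fin n) (j k : A i)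
    (hj : 0 < marg σ i j) (B : ℝ) :
    ∑ b : ∀ l : {l : Fin n // l ≠ i}, A l,
        condl σ i j b * (B * wit σ i (joinA i j b) - B * wit σ i (joinA i k b))
      = B * tq σ i j k := by
  classical
  have hNj := norm2_pos σ i j hj
  have hsq : ∑ b, condl σ i j b * (condl σ i j b / norm2 (condl σ i j))
      = norm2 (condl σ i j) := by
    have : ∀ b, condl σ i j b * (condl σ i j b / norm2 (condl σ i j))
        = condl σ i j b ^ 2 / norm2 (condl σ i j) := by
      intro b; ring
    rw [Finset.sum_congr rfl fun b _ => this b, ← Finset.sum_div, sumsq_eq_sq_norm2,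
      sq, mul_div_assoc, div_self hNj.ne', mul_one]
  by_cases hk : 0 < marg σ i k
  · have hk0 : condl σ i k ≠ 0 := condl_ne_zero σ i k hk
    have hNk := norm2_pos σ i k hk
    rw [tq, if_neg hk0]
    simp only [wit_joinA, if_pos hj, if_pos hk]
    have hterm : ∀ b, condl σ i j b *
        (B * (condl σ i j b / norm2 (condl σ i j)) - B * (condl σ i k b / norm2 (condl σ i k)))
        = B * (condl σ i j b * (condl σ i j b / norm2 (condl σ i j)))
          - B * (condl σ i j b * condl σ i k b / norm2 (condl σ i k)) := by
      intro b; ring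
    rw [Finset.sum_congr rfl fun b _ => hterm b, Finset.sum_sub_distrib,
      ← Finset.mul_sum, ← Finset.mul_sum, hsq, ← Finset.sum_div, ← inner2]
    ring
  · have hk0 : condl σ i k = 0 := condl_of_not_pos σ i k hk
    rw [tq, if_pos hk0]
    simp only [wit_joinA, if_pos hj, if_neg hk]
    have hterm : ∀ b, condl σ i j b *
        (B * (condl σ i j b / norm2 (condl σ i j)) - B * 0)
        = B * (condl σ i j b * (condl σ i j b / norm2 (condl σ i j))) := by
      intro b; ring
    rw [Finset.sum_congr rfl fun b _ => hterm b, ← Finset.mul_sum, hsq]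

end Aux


/-- **ε-sCE via the scaled witness.** Suppose all pairs of `σ`-supported actions of each
player have differing conditionals. Then `γ^{CE} = min t_{ijk} > 0` (over players `i`,
`σ`-supported `j`, and `k ≠ j`), i.e. each such `t_{ijk} > 0`; and for any `B > 0` and
`0 < ε ≤ B γ^{CE}` (i.e. `ε ≤ B t_{ijk}` for all such `i, j, k`), the scaled witness
`u = B w` is bounded by `B` and achieves a CE deviation gap of at least `ε`. -/
theorem eps_sCE_of_scaled_witness {n : ℕ} {A : Fin n → Type*}
    [∀ l, Fintype (A l)] [∀ l, Nonempty (A l)]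
    (σ : (∀ l, A l) → ℝ) (hσ : IsMixed σ)
    (hc : ∀ i : Fin n, ∀ j k : A i, 0 < marg σ i j → 0 < marg σ i k → j ≠ k →
      condl σ i j ≠ condl σ i k) :
    (∀ i : Fin n, ∀ j k : A i, 0 < marg σ i j → k ≠ j → 0 < tq σ i j k) ∧
    (∀ B : ℝ, 0 < B → ∀ ε : ℝ, 0 < ε →
      (∀ i : Fin n, ∀ j k : A i, 0 < marg σ i j → k ≠ j → ε ≤ B * tq σ i j k) →
      ((∀ i : Fin n, ∀ a : ∀ l, A l, |B * wit σ i a| ≤ B) ∧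
        ∀ i : Fin n, ∀ j : A i, 0 < marg σ i j → ∀ k : A i, k ≠ j →
          ε ≤ ∑ b : ∀ l : {l : Fin n // l ≠ i}, A l,
                condl σ i j b * (B * wit σ i (joinA i j b) - B * wit σ i (joinA i k b)))) := by
  have hpos : ∀ i : Fin n, ∀ j k : A i, 0 < marg σ i j → k ≠ j → 0 < tq σ i j k := by
    intro i j k hj hkj
    exact tq_pos_aux σ i j k hj (fun hk => hc i j k hj hk hkj.symm)
  refine ⟨hpos, ?_⟩
  intro B hB ε hε hεle
  constructor
  · intro i a
    have hw0 : 0 ≤ wit σ i a := by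
      unfold wit
      split
      · exact div_nonneg (condl_nonneg σ hσ i (a i) (restr i a))
          (Real.sqrt_nonneg _)
      · exact le_refl _
    have hw1 : wit σ i a ≤ 1 := by
      unfold wit
      split
      · rename_i h
        exact div_le_one_of_le₀
          (le_norm2 _ (condl_nonneg σ hσ i (a i)) (restr i a)) (Real.sqrt_nonneg _)
      · exact zero_le_one
    rw [abs_of_nonneg (mul_nonneg hB.le hw0)]
    calc B * wit σ i a ≤ B * 1 := by nlinarith
      _ = B := mul_one B
  · intro i j hj k hkj
    rw [sum_gap_eq σ i j k hj B]
    exact hεle i j k hj hkj
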